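/- Let n ≥ 2 be an even integer and let α_n ∈ (0,1) be the unique fixed point of f_n in (0,1). Then α_n is linearly attracting: the derivative satisfies |f_n′(α_n)| < 1. -/

import Mathlib

open Real Filter Finset



-- Step A: sum of exp over roots of unity
lemma exp_sum_eq (N : ℕ) (hN : 0 < N) (m : ℤ) (hm : m.natAbs < N) :
    ∑ j ∈ Finset.range N, Complex.exp ((m : ℂ) * ((2 * Real.pi * j / N : ℝ) : ℂ) * Complex.I) =
      if m = 0 then (N : ℂ) else 0 := by
  have hNC : (N : ℂ) ≠ 0 := Nat.cast_ne_zero.mpr hN.ne'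
  rcases eq_or_ne m 0 with rfl | hm0
  · simp
  · rw [if_neg hm0]
    set w : ℂ := Complex.exp ((m : ℂ) * (2 * Real.pi / N) * Complex.I) with hw
    have hterm : ∀ j ∈ Finset.range N,
        Complex.exp ((m : ℂ) * ((2 * Real.pi * j / N : ℝ) : ℂ) * Complex.I) = w ^ j := by
      intro j _
      rw [hw, ← Complex.exp_nat_mul]
      congr 1
      push_cast
      field_simp
    rw [Finset.sum_congr rfl hterm]
    have hw1 : w ≠ 1 := by
      intro h
      obtain ⟨t, ht⟩ := Complex.exp_eq_one_iff.mp h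
      have hπ : (Real.pi : ℂ) ≠ 0 := Complex.ofReal_ne_zero.mpr Real.pi_ne_zero
      have hI : Complex.I ≠ 0 := Complex.I_ne_zero
      have hmt : (m : ℂ) = t * N := by
        field_simp at ht
        have h2 : ((m : ℂ)) * (2 * (Real.pi:ℂ) * Complex.I) = (t * N) * (2 * (Real.pi:ℂ) * Complex.I) := by
          linear_combination (2 * (Real.pi:ℂ) * Complex.I) * ht
        have h3 : (2 * (Real.pi:ℂ) * Complex.I) ≠ 0 := by
          simp [hπ, hI]
        exact mul_right_cancel₀ h3 h2
      have hmt' : m = t * N := by exact_mod_cast hmt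
      have hdvd : (N : ℤ) ∣ m := ⟨t, by linarith [hmt']⟩
      have : N ≤ m.natAbs := by
        have := Int.natAbs_dvd_natAbs.mpr hdvd
        simpa using Nat.le_of_dvd (Int.natAbs_pos.mpr hm0) this
      omega
    have hwN : w ^ N = 1 := by
      rw [hw, ← Complex.exp_nat_mul]
      have : (N : ℂ) * ((m:ℂ) * (2 * Real.pi / N) * Complex.I) = (m : ℂ) * (2 * Real.pi * Complex.I) := by
        field_simp
      rw [this]
      exact_mod_cast Complex.exp_int_mul_two_pi_mul_I m
    rw [geom_sum_eq hw1, hwN]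
    simp


lemma cos_pow_expand (θ : ℝ) (k : ℕ) :
    ((Real.cos θ : ℝ) : ℂ) ^ k = (∑ i ∈ Finset.range (k + 1),
      (k.choose i : ℂ) * Complex.exp (((2 * (i:ℤ) - k : ℤ) : ℂ) * (θ : ℂ) * Complex.I)) / 2 ^ k := by
  rw [Complex.ofReal_cos]
  have h2c : (Complex.cos θ) = (Complex.exp ((θ:ℂ) * Complex.I) + Complex.exp (-(θ:ℂ) * Complex.I)) / 2 := by
    rw [eq_div_iff (two_ne_zero), mul_comm]
    exact (Complex.two_cos (θ:ℂ))
  rw [h2c, div_pow, add_pow, Finset.sum_div, Finset.sum_div]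
  apply Finset.sum_congr rfl
  intro i hi
  have hik : i ≤ k := by
    have := Finset.mem_range.mp hi; omega
  rw [← Complex.exp_nat_mul, ← Complex.exp_nat_mul, ← Complex.exp_add]
  have harg : (i:ℂ) * ((θ:ℂ) * Complex.I) + ((k - i : ℕ):ℂ) * (-(θ:ℂ) * Complex.I)
      = ((2 * (i:ℤ) - k : ℤ) : ℂ) * (θ:ℂ) * Complex.I := by
    push_cast [Nat.cast_sub hik]
    ring
  rw [harg]
  ring

lemma cos_pow_sum (N k : ℕ) (hN : 0 < N) (hk : k < N) :
    ∑ j ∈ Finset.range N, (Real.cos (2 * Real.pi * j / N)) ^ k =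
      if Even k then ((k.choose (k / 2) : ℝ) * N / 2 ^ k) else 0 := by
  have key : ((∑ j ∈ Finset.range N, (Real.cos (2 * Real.pi * j / N)) ^ k : ℝ) : ℂ)
      = ((if Even k then ((k.choose (k / 2) : ℝ) * N / 2 ^ k) else 0 : ℝ) : ℂ) := by
    rw [Complex.ofReal_sum]
    have step : ∀ j ∈ Finset.range N, ((Real.cos (2 * Real.pi * j / N) ^ k : ℝ) : ℂ)
        = (∑ i ∈ Finset.range (k + 1), (k.choose i : ℂ) *
            Complex.exp (((2 * (i:ℤ) - k : ℤ) : ℂ) * ((2 * Real.pi * j / N : ℝ) : ℂ) * Complex.I)) / 2 ^ k := by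
      intro j _
      rw [Complex.ofReal_pow]
      exact cos_pow_expand _ k
    rw [Finset.sum_congr rfl step, ← Finset.sum_div, Finset.sum_comm]
    have inner : ∀ i ∈ Finset.range (k + 1),
        (∑ j ∈ Finset.range N, (k.choose i : ℂ) *
          Complex.exp (((2 * (i:ℤ) - k : ℤ) : ℂ) * ((2 * Real.pi * j / N : ℝ) : ℂ) * Complex.I))
        = (k.choose i : ℂ) * (if (2 * (i:ℤ) - k : ℤ) = 0 then (N : ℂ) else 0) := by
      intro i hi
      rw [← Finset.mul_sum]
      congr 1
      apply exp_sum_eq N hN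
      have : i < k + 1 := Finset.mem_range.mp hi
      omega
    rw [Finset.sum_congr rfl inner]
    by_cases hke : Even k
    · rw [if_pos hke]
      obtain ⟨m, hm⟩ := hke
      have hk2 : k / 2 = m := by omega
      rw [Finset.sum_eq_single (k / 2)]
      · rw [if_pos (by omega)]
        push_cast
        ring
      · intro i hi hne
        rw [if_neg (by omega), mul_zero]
      · intro h
        exact absurd (Finset.mem_range.mpr (by omega)) h
    · rw [if_neg hke, Complex.ofReal_zero]
      rw [Finset.sum_eq_zero, zero_div]
      intro i hi
      rw [if_neg, mul_zero]
      intro hcon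
      exact hke ⟨i, by omega⟩
  exact_mod_cast key


/-- `f n t = ∑_{k, 0 ≤ 2k ≤ n} C(n,2k)·C(2k,k)·((1−t)/2)^{2k}·t^{n−2k}` -/
noncomputable def f (n : ℕ) (t : ℝ) : ℝ :=
  ∑ k ∈ Finset.range (n / 2 + 1),
    (n.choose (2 * k) : ℝ) * ((2 * k).choose k : ℝ) * ((1 - t) / 2) ^ (2 * k) * t ^ (n - 2 * k)

lemma f_rep (n : ℕ) (t : ℝ) :
    f n t = (1 / (n + 2 : ℝ)) * ∑ j ∈ Finset.range (n + 2),
      (t + (1 - t) * Real.cos (2 * Real.pi * j / (n + 2))) ^ n := by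
  have hN : (0:ℕ) < n + 2 := by omega
  have hNR : ((n:ℝ) + 2) ≠ 0 := by positivity
  have expand : ∀ j ∈ Finset.range (n + 2),
      (t + (1 - t) * Real.cos (2 * Real.pi * j / (n + 2))) ^ n
      = ∑ k ∈ Finset.range (n + 1),
          ((1 - t) ^ k * (Real.cos (2 * Real.pi * j / (n + 2))) ^ k) * t ^ (n - k) * (n.choose k : ℝ) := by
    intro j _
    rw [add_comm, add_pow]
    apply Finset.sum_congr rfl
    intro k _
    rw [mul_pow]
  rw [Finset.sum_congr rfl expand, Finset.sum_comm]
  have inner : ∀ k ∈ Finset.range (n + 1),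
      (∑ j ∈ Finset.range (n + 2),
        ((1 - t) ^ k * (Real.cos (2 * Real.pi * j / (n + 2))) ^ k) * t ^ (n - k) * (n.choose k : ℝ))
      = (1 - t) ^ k * t ^ (n - k) * (n.choose k : ℝ) *
          (if Even k then ((k.choose (k / 2) : ℝ) * (n+2) / 2 ^ k) else 0) := by
    intro k hk
    have : ∀ j ∈ Finset.range (n+2), ((1 - t) ^ k * (Real.cos (2 * Real.pi * j / (n + 2))) ^ k) * t ^ (n - k) * (n.choose k : ℝ)
        = ((1 - t) ^ k * t ^ (n - k) * (n.choose k : ℝ)) * (Real.cos (2 * Real.pi * j / (n + 2))) ^ k := by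
      intro j _; ring
    rw [Finset.sum_congr rfl this, ← Finset.mul_sum]
    have hkn : k < n + 2 := by have := Finset.mem_range.mp hk; omega
    have := cos_pow_sum (n+2) k hN hkn
    push_cast at this ⊢
    rw [this]
  rw [Finset.sum_congr rfl inner]
  -- now: f n t = (1/(n+2)) * ∑_{k<n+1} (1-t)^k t^(n-k) C(n,k) * ite (Even k) (C(k,k/2)(n+2)/2^k) 0
  rw [Finset.mul_sum]
  have clean : ∀ k ∈ Finset.range (n + 1),
      (1 / ((n:ℝ) + 2)) * ((1 - t) ^ k * t ^ (n - k) * (n.choose k : ℝ) *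
          (if Even k then ((k.choose (k / 2) : ℝ) * ((n:ℝ)+2) / 2 ^ k) else 0))
      = (if Even k then ((n.choose k : ℝ) * ((k.choose (k / 2)) : ℝ) * ((1 - t)/2) ^ k * t ^ (n - k)) else 0) := by
    intro k _
    by_cases hke : Even k
    · rw [if_pos hke, if_pos hke, div_pow]
      field_simp
    · rw [if_neg hke, if_neg hke, mul_zero, mul_zero]
  rw [Finset.sum_congr rfl clean, ← Finset.sum_filter]
  -- reindex: sum over even k in range (n+1) equals f n t
  unfold f
  apply Finset.sum_nbij' (i := fun m => 2 * m) (j := fun k => k / 2)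
  · intro m hm
    simp only [Finset.mem_range] at hm
    simp only [Finset.mem_filter, Finset.mem_range]
    exact ⟨by omega, ⟨m, by omega⟩⟩
  · intro k hk
    simp only [Finset.mem_filter, Finset.mem_range] at hk
    obtain ⟨hk1, m, hm⟩ := hk
    simp only [Finset.mem_range]
    omega
  · intro m hm
    omega
  · intro k hk
    simp only [Finset.mem_filter, Finset.mem_range] at hk
    obtain ⟨hk1, m, hm⟩ := hk
    omega
  · intro m hm
    have h2 : (2 * m) / 2 = m := by omega
    rw [h2]


lemma convexOn_sum' {ι : Type*} (s : Finset ι) (g : ι → ℝ → ℝ)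
    (h : ∀ i ∈ s, ConvexOn ℝ Set.univ (g i)) :
    ConvexOn ℝ Set.univ (fun t => ∑ i ∈ s, g i t) := by
  classical
  induction s using Finset.induction with
  | empty => simpa using convexOn_const 0 convex_univ
  | @insert a s ha ih =>
    simp only [Finset.sum_insert ha]
    exact (h a (Finset.mem_insert_self a s)).add (ih fun i hi => h i (Finset.mem_insert_of_mem hi))

lemma f_convex (n : ℕ) (heven : Even n) : ConvexOn ℝ Set.univ (f n) := by
  have hterm : ∀ c : ℝ, ConvexOn ℝ Set.univ (fun t : ℝ => (t + (1 - t) * c) ^ n) := by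
    intro c
    have h1 := (heven.convexOn_pow (𝕜 := ℝ)).comp_affineMap (AffineMap.lineMap (c : ℝ) (1 : ℝ))
    simp only [Set.preimage_univ] at h1
    have e : ((fun x : ℝ => x ^ n) ∘ ⇑(AffineMap.lineMap (c : ℝ) (1 : ℝ))) = (fun t : ℝ => (t + (1 - t) * c) ^ n) := by
      funext t
      simp only [Function.comp_apply, AffineMap.lineMap_apply_module]
      congr 1
      simp only [smul_eq_mul]
      ring
    rw [e] at h1
    exact h1
  have hsum := convexOn_sum' (Finset.range (n + 2))
    (fun j => fun t : ℝ => (t + (1 - t) * Real.cos (2 * Real.pi * j / (n + 2))) ^ n)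
    (fun j _ => hterm _)
  have hsmul := hsum.smul (show (0:ℝ) ≤ 1 / ((n:ℝ) + 2) by positivity)
  have heq : f n = fun t => (1 / ((n:ℝ) + 2)) •
      ∑ j ∈ Finset.range (n + 2), (t + (1 - t) * Real.cos (2 * Real.pi * j / (n + 2))) ^ n := by
    funext t
    rw [f_rep, smul_eq_mul]
  rw [heq]
  exact hsmul

lemma f_one (n : ℕ) : f n 1 = 1 := by
  unfold f
  rw [Finset.sum_eq_single 0]
  · norm_num
  · intro k _ hne
    have h0 : ((1 - (1:ℝ)) / 2) = 0 := by norm_num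
    rw [h0, zero_pow (by omega), mul_zero, zero_mul]
  · intro h
    exact absurd (Finset.mem_range.mpr (by omega)) h

lemma f_zero_le_one (n : ℕ) (heven : Even n) : f n 0 ≤ 1 := by
  rw [f_rep]
  have hb : ∀ j ∈ Finset.range (n + 2),
      ((0:ℝ) + (1 - 0) * Real.cos (2 * Real.pi * j / (n + 2))) ^ n ≤ 1 := by
    intro j _
    have h1 : |(0:ℝ) + (1 - 0) * Real.cos (2 * Real.pi * j / (n + 2))| ≤ 1 := by
      simp [abs_le, Real.neg_one_le_cos, Real.cos_le_one]
    calc ((0:ℝ) + (1 - 0) * Real.cos (2 * Real.pi * j / (n + 2))) ^ n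
        ≤ |(0:ℝ) + (1 - 0) * Real.cos (2 * Real.pi * j / (n + 2))| ^ n := by
          rcases heven with ⟨m, hm⟩
          rw [hm, ← abs_pow] at *
          exact le_abs_self _
      _ ≤ 1 := pow_le_one₀ (abs_nonneg _) h1
  have hsum := Finset.sum_le_sum hb
  simp only [Finset.sum_const, Finset.card_range, nsmul_eq_mul, mul_one] at hsum
  have : (0:ℝ) < (n:ℝ) + 2 := by positivity
  rw [div_mul_eq_mul_div, one_mul, div_le_one this]
  exact le_trans hsum (by push_cast; linarith)

lemma pair_ineq (n : ℕ) (heven : Even n) {s c : ℝ} (hs0 : 0 < s) (hs1 : s < 1)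
    (hc : -1 ≤ c) (hc1 : c ≤ 1) :
    c ^ n ≤ (s + (1 - s) * c) ^ n + (s - (1 - s) * c) ^ n := by
  rcases le_or_gt 0 c with h0 | h0
  · have h1 : c ≤ s + (1 - s) * c := by nlinarith
    have h3 := pow_le_pow_left₀ h0 h1 n
    have h2 : 0 ≤ (s - (1 - s) * c) ^ n := heven.pow_nonneg _
    linarith
  · have hcn : c ^ n = (-c) ^ n := (heven.neg_pow c).symm
    have h1 : -c ≤ s - (1 - s) * c := by nlinarith
    have h3 := pow_le_pow_left₀ (by linarith) h1 n
    have h2 : 0 ≤ (s + (1 - s) * c) ^ n := heven.pow_nonneg _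
    linarith

lemma pair_ineq_strict (n : ℕ) (heven : Even n) (hn0 : n ≠ 0) {s c : ℝ} (hs0 : 0 < s) (hs1 : s < 1)
    (hc0 : 0 ≤ c) (hc1 : c < 1) :
    c ^ n < (s + (1 - s) * c) ^ n + (s - (1 - s) * c) ^ n := by
  have h1 : c < s + (1 - s) * c := by nlinarith
  have h3 := pow_lt_pow_left₀ h1 hc0 hn0
  have h2 : 0 ≤ (s - (1 - s) * c) ^ n := heven.pow_nonneg _
  linarith


lemma f_gt_half (n : ℕ) (hn : 2 ≤ n) (heven : Even n) {s : ℝ} (hs0 : 0 < s) (hs1 : s < 1) :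
    f n 0 / 2 < f n s := by
  obtain ⟨m, hm⟩ := heven
  have heven' : Even n := ⟨m, hm⟩
  set M : ℕ := m + 1 with hMdef
  have hMM : n + 2 = M + M := by omega
  have hM2 : 2 ≤ M := by omega
  have hnm : (n:ℝ) = 2 * (m:ℝ) := by
    have : (n:ℝ) = ((m + m : ℕ) : ℝ) := by exact_mod_cast congrArg (Nat.cast : ℕ → ℝ) hm
    push_cast at this
    linarith
  have hNR : ((n:ℝ) + 2) = 2 * (M:ℝ) := by push_cast [hMdef]; linarith
  have hN0 : ((n:ℝ) + 2) ≠ 0 := by positivity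
  have hneg : ∀ j : ℕ, Real.cos (2 * Real.pi * (M + j : ℕ) / (n + 2)) =
      - Real.cos (2 * Real.pi * j / (n + 2)) := by
    intro j
    have harg : 2 * Real.pi * ((M + j : ℕ) : ℝ) / ((n:ℝ) + 2) =
        2 * Real.pi * j / ((n:ℝ) + 2) + Real.pi := by
      rw [hNR]
      have hM0 : (M:ℝ) ≠ 0 := by positivity
      field_simp
      push_cast
      ring
    rw [harg, Real.cos_add_pi]
  have split : ∀ F : ℕ → ℝ, ∑ j ∈ Finset.range (n + 2), F j =
      ∑ j ∈ Finset.range M, (F j + F (M + j)) := by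
    intro F
    rw [hMM, Finset.sum_range_add, ← Finset.sum_add_distrib]
  have hfs : f n s = (1 / ((n:ℝ) + 2)) * ∑ j ∈ Finset.range M,
      ((s + (1 - s) * Real.cos (2 * Real.pi * j / (n + 2))) ^ n
        + (s - (1 - s) * Real.cos (2 * Real.pi * j / (n + 2))) ^ n) := by
    rw [f_rep, split]
    congr 1
    apply Finset.sum_congr rfl
    intro j _
    congr 1
    rw [hneg j]
    congr 1
    ring
  have hf0 : f n 0 = (1 / ((n:ℝ) + 2)) * ∑ j ∈ Finset.range M,
      2 * (Real.cos (2 * Real.pi * j / (n + 2))) ^ n := by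
    rw [f_rep, split]
    congr 1
    apply Finset.sum_congr rfl
    intro j _
    rw [hneg j]
    have h1 : (0 : ℝ) + (1 - 0) * Real.cos (2 * Real.pi * j / (n + 2)) =
        Real.cos (2 * Real.pi * j / (n + 2)) := by ring
    have h2 : (0 : ℝ) + (1 - 0) * (- Real.cos (2 * Real.pi * j / (n + 2))) =
        - Real.cos (2 * Real.pi * j / (n + 2)) := by ring
    rw [h1, h2, heven'.neg_pow]
    ring
  rw [hfs, hf0]
  have hlt : ∑ j ∈ Finset.range M, (Real.cos (2 * Real.pi * j / (n + 2))) ^ n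
      < ∑ j ∈ Finset.range M,
      ((s + (1 - s) * Real.cos (2 * Real.pi * j / (n + 2))) ^ n
        + (s - (1 - s) * Real.cos (2 * Real.pi * j / (n + 2))) ^ n) := by
    apply Finset.sum_lt_sum
    · intro j _
      exact pair_ineq n heven' hs0 hs1 (Real.neg_one_le_cos _) (Real.cos_le_one _)
    · refine ⟨1, Finset.mem_range.mpr (by omega), ?_⟩
      have hπ := Real.pi_pos
      have hang : (0:ℝ) < 2 * Real.pi * (1:ℕ) / ((n:ℝ) + 2) := by positivity
      have hang2 : 2 * Real.pi * ((1:ℕ):ℝ) / ((n:ℝ) + 2) ≤ Real.pi / 2 := by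
        rw [div_le_div_iff₀ (by positivity) (by norm_num : (0:ℝ) < 2)]
        push_cast
        nlinarith [hn, show (4:ℝ) ≤ (n:ℝ) + 2 by exact_mod_cast by push_cast; omega]
      apply pair_ineq_strict n heven' (by omega) hs0 hs1
      · apply Real.cos_nonneg_of_mem_Icc
        constructor <;> [linarith; linarith]
      · have := Real.cos_lt_cos_of_nonneg_of_le_pi (le_refl 0)
          (by linarith : 2 * Real.pi * ((1:ℕ):ℝ) / ((n:ℝ) + 2) ≤ Real.pi) hang
        simpa [Real.cos_zero] using this
  have hpos : (0:ℝ) < 1 / ((n:ℝ) + 2) := by positivity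
  calc (1 / ((n:ℝ) + 2)) * (∑ j ∈ Finset.range M,
        2 * (Real.cos (2 * Real.pi * j / (n + 2))) ^ n) / 2
      = (1 / ((n:ℝ) + 2)) * ∑ j ∈ Finset.range M,
          (Real.cos (2 * Real.pi * j / (n + 2))) ^ n := by
        rw [← Finset.mul_sum]
        ring
    _ < _ := by exact mul_lt_mul_of_pos_left hlt hpos

lemma f_diff (n : ℕ) : Differentiable ℝ (f n) := by
  unfold f
  apply Differentiable.fun_sum
  intro k _
  fun_prop

lemma chord {F : ℝ → ℝ} (hconv : ConvexOn ℝ Set.univ F) {a x : ℝ} (hFa : F a = a)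
    (hF1 : F 1 = 1) (ha : a < 1) (hax : a ≤ x) (hx1 : x ≤ 1) : F x ≤ x := by
  have h1 : 0 < 1 - a := by linarith
  have hlam : 0 ≤ (1 - x) / (1 - a) := div_nonneg (by linarith) h1.le
  have hmu : 0 ≤ (x - a) / (1 - a) := div_nonneg (by linarith) h1.le
  have hsum : (1 - x) / (1 - a) + (x - a) / (1 - a) = 1 := by field_simp; ring
  have hcomb : ((1 - x) / (1 - a)) • a + ((x - a) / (1 - a)) • (1:ℝ) = x := by
    simp only [smul_eq_mul]
    field_simp
    ring
  have h2 := hconv.2 (Set.mem_univ a) (Set.mem_univ (1:ℝ)) hlam hmu hsum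
  rw [hcomb] at h2
  simp only [smul_eq_mul, hFa, hF1, mul_one] at h2
  calc F x ≤ (1 - x) / (1 - a) * a + (x - a) / (1 - a) := h2
    _ = x := by field_simp; ring

theorem stmt_4 (n : ℕ) (hn : 2 ≤ n) (heven : Even n) (α : ℝ)
    (hα : α ∈ Set.Ioo (0 : ℝ) 1) (hfix : f n α = α)
    (huniq : ∀ t ∈ Set.Ioo (0 : ℝ) 1, f n t = t → t = α) :
    |deriv (f n) α| < 1 := by
  obtain ⟨hα0, hα1⟩ := hα
  have hconv := f_convex n heven
  have hdiff := (f_diff n) α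
  have hf1 := f_one n
  -- f n 0 > 0 : from f_gt_half at any point? use s = α: f n 0 / 2 < f n α = α... not needed for pos
  -- s₀ := f n 0 / 2 < α :
  have hs0lt : f n 0 / 2 < α := by
    by_contra hcon
    push_neg at hcon
    -- α ≤ f n 0 / 2 =: s₀, and s₀ ∈ [α, 1) ⊂ (0,1)
    have hs0pos : 0 < f n 0 / 2 := lt_of_lt_of_le hα0 hcon
    have hs0lt1 : f n 0 / 2 < 1 := by
      have := f_zero_le_one n heven
      linarith
    have hgt := f_gt_half n hn heven hs0pos hs0lt1
    have hle := chord hconv hfix hf1 hα1 hcon hs0lt1.le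
    linarith
  -- lower bound: deriv ≥ slope from 0 to α
  have hlow : -1 < deriv (f n) α := by
    have hslope := hconv.slope_le_deriv (Set.mem_univ 0) (Set.mem_univ α) hα0 hdiff
    rw [slope_def_field] at hslope
    have : (f n α - f n 0) / (α - 0) = (α - f n 0) / α := by rw [hfix]; ring_nf
    rw [this] at hslope
    have h2 : (-1 : ℝ) < (α - f n 0) / α := by
      rw [lt_div_iff₀ hα0]
      linarith
    linarith
  -- upper bound
  have hup : deriv (f n) α < 1 := by
    set β : ℝ := (1 + α) / 2 with hβ
    have hαβ : α < β := by rw [hβ]; linarith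
    have hβ1 : β < 1 := by rw [hβ]; linarith
    have hβ0 : 0 < β := by rw [hβ]; linarith
    have hfβ : f n β ≤ β := chord hconv hfix hf1 hα1 hαβ.le hβ1.le
    have hne : f n β ≠ β := by
      intro h
      have := huniq β ⟨hβ0, hβ1⟩ h
      linarith [hαβ, this.symm ▸ hαβ]
    have hfβlt : f n β < β := lt_of_le_of_ne hfβ hne
    have hslope := hconv.deriv_le_slope (Set.mem_univ α) (Set.mem_univ β) hαβ hdiff
    rw [slope_def_field, hfix] at hslope
    have h2 : (f n β - α) / (β - α) < 1 := by
      rw [div_lt_one (by linarith)]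
      linarith
    linarith
  rw [abs_lt]
  exact ⟨hlow, hup⟩
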